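/- For every constant c > 0, the set of functions {z ↦ p(z, z̄)·e^{-c|z|²} : p ∈ Π(z,z̄)} is dense in C₀(ℂ, ℂ) with respect to the supremum norm. Equivalently: for every continuous function f : ℂ → ℂ vanishing at infinity there is a sequence (pₙ) of polynomials in z and z̄ such that pₙ(z,z̄)·e^{-c|z|²} → f uniformly on ℂ. -/

import Mathlib

open MeasureTheory Filter Finset MvPolynomial OnePoint

noncomputable def ev (q : MvPolynomial (Fin 2) ℂ) (z : ℂ) : ℂ :=
  MvPolynomial.eval ![z, (starRingEnd ℂ) z] q

noncomputable def Gw (b : ℝ) (z : ℂ) : ℂ := ((Real.exp (-b * ‖z‖ ^ 2) : ℝ) : ℂ)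

def Approx (c : ℝ) (g : ℂ → ℂ) : Prop :=
  ∀ ε > 0, ∃ q : MvPolynomial (Fin 2) ℂ, ∀ z, ‖ev q z * Gw c z - g z‖ < ε

/-- Global Taylor remainder bound for `exp (-t)`. -/
lemma exp_neg_taylor_bound : ∀ (N : ℕ) (t : ℝ), 0 ≤ t →
    |Real.exp (-t) - ∑ k ∈ range N, (-t) ^ k / k.factorial| ≤ t ^ N / N.factorial := by
  intro N
  induction N with
  | zero =>
    intro t ht
    simp only [range_zero, sum_empty, sub_zero, pow_zero, Nat.factorial_zero, Nat.cast_one,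
      div_one]
    rw [abs_of_pos (Real.exp_pos _)]
    exact Real.exp_le_one_iff.mpr (by linarith)
  | succ N ih =>
    -- E m t = exp(-t) - partial sum
    set E : ℕ → ℝ → ℝ := fun m t => Real.exp (-t) - ∑ k ∈ range m, (-t) ^ k / k.factorial with hE
    intro t ht
    have hderiv : ∀ s : ℝ, HasDerivAt (E (N + 1)) (-(E N s)) s := by
      intro s
      have h1 : HasDerivAt (fun u : ℝ => Real.exp (-u)) (-Real.exp (-s)) s := by
        simpa [Function.comp_def] using (Real.hasDerivAt_exp (-s)).comp s (hasDerivAt_neg s)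
      have h2 : HasDerivAt (fun u : ℝ => ∑ k ∈ range (N + 1), (-u) ^ k / k.factorial)
          (-∑ k ∈ range N, (-s) ^ k / k.factorial) s := by
        have h3 : HasDerivAt (fun u : ℝ => ∑ k ∈ range (N + 1), (-u) ^ k / k.factorial)
            (∑ k ∈ range (N + 1), (k * (-s) ^ (k - 1) * (-1)) / k.factorial) s := by
          apply HasDerivAt.fun_sum
          intro k _
          exact (((hasDerivAt_pow k (-s)).comp s (hasDerivAt_neg s))).div_const _
        convert h3 using 1
        rw [Finset.sum_range_succ' (fun k => ((k : ℝ) * (-s) ^ (k - 1) * (-1)) / k.factorial) N]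
        simp only [Nat.cast_zero, zero_mul, Nat.factorial_zero, Nat.cast_one]
        rw [← Finset.sum_neg_distrib]
        norm_num
        rw [← Finset.sum_neg_distrib]
        apply Finset.sum_congr rfl
        intro k _
        have : ((k + 1).factorial : ℝ) = (k + 1) * k.factorial := by
          rw [Nat.factorial_succ]; push_cast; ring
        rw [this]
        field_simp
      have := h1.sub h2
      simp only [hE]
      refine HasDerivAt.congr_deriv this ?_
      ring
    have key : ∀ u : ℝ, 0 ≤ u → |E (N+1) u| ≤ u ^ (N+1) / (N+1).factorial := by
      intro u hu
      have hmono : ∀ (σ : ℝ), σ = 1 ∨ σ = -1 →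
          MonotoneOn (fun v => v ^ (N+1) / (N+1).factorial + σ * E (N+1) v) (Set.Ici (0:ℝ)) := by
        intro σ hσ
        apply monotoneOn_of_deriv_nonneg (convex_Ici 0)
        · apply Continuous.continuousOn
          have : Continuous (E (N+1)) := by
            apply Continuous.sub (by fun_prop)
            fun_prop
          fun_prop
        · apply Differentiable.differentiableOn
          intro v
          exact ((differentiable_pow (N+1) v).div_const _).add
            ((hderiv v).differentiableAt.const_mul σ)
        · intro v hv
          rw [interior_Ici] at hv
          have hd : HasDerivAt (fun v => v ^ (N+1) / ((N+1).factorial : ℝ) + σ * E (N+1) v)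
              ((N+1) * v ^ N / (N+1).factorial + σ * (-(E N v))) v := by
            have := ((hasDerivAt_pow (N+1) v).div_const ((N+1).factorial : ℝ)).add
              ((hderiv v).const_mul σ)
            exact this.congr_deriv (by push_cast; ring)
          rw [hd.deriv]
          have hEb : |E N v| ≤ v ^ N / N.factorial := ih v (le_of_lt hv)
          have hfact : ((N+1).factorial : ℝ) = (N+1) * N.factorial := by
            rw [Nat.factorial_succ]; push_cast; ring
          have h1 : ((N:ℝ)+1) * v ^ N / (N+1).factorial = v ^ N / N.factorial := by
            rw [hfact]; field_simp
          rw [h1]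
          have habs : |σ * (-(E N v))| ≤ v ^ N / N.factorial := by
            rw [abs_mul, abs_neg]
            rcases hσ with h | h <;> simp [h, hEb]
          have h3 := neg_le_of_abs_le habs
          linarith
      have hzero : E (N+1) 0 = 0 := by
        simp only [hE, neg_zero, Real.exp_zero]
        rw [Finset.sum_eq_single 0]
        · simp
        · intro k _ hk; simp [zero_pow hk]
        · simp
      have h1 := hmono 1 (Or.inl rfl) (Set.mem_Ici.mpr le_rfl) (Set.mem_Ici.mpr hu) hu
      have h2 := hmono (-1) (Or.inr rfl) (Set.mem_Ici.mpr le_rfl) (Set.mem_Ici.mpr hu) hu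
      simp only [hzero, one_mul, neg_one_mul, mul_zero, add_zero] at h1 h2
      norm_num at h1 h2
      rw [abs_le]
      constructor <;> linarith
    exact key t ht


lemma ev_growth (q : MvPolynomial (Fin 2) ℂ) :
    ∃ C : ℝ, ∃ D : ℕ, 0 ≤ C ∧ ∀ z : ℂ, ‖ev q z‖ ≤ C * max 1 ‖z‖ ^ D := by
  induction q using MvPolynomial.induction_on with
  | C a =>
    exact ⟨‖a‖, 0, norm_nonneg a, fun z => by simp [ev]⟩
  | add p q hp hq =>
    obtain ⟨C₁, D₁, hC₁, h₁⟩ := hp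
    obtain ⟨C₂, D₂, hC₂, h₂⟩ := hq
    refine ⟨C₁ + C₂, max D₁ D₂, by linarith, fun z => ?_⟩
    have hm : (1:ℝ) ≤ max 1 ‖z‖ := le_max_left _ _
    have e1 : max 1 ‖z‖ ^ D₁ ≤ max 1 ‖z‖ ^ (max D₁ D₂) :=
      pow_le_pow_right₀ hm (le_max_left _ _)
    have e2 : max 1 ‖z‖ ^ D₂ ≤ max 1 ‖z‖ ^ (max D₁ D₂) :=
      pow_le_pow_right₀ hm (le_max_right _ _)
    have : ev (p + q) z = ev p z + ev q z := by simp [ev]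
    rw [this]
    calc ‖ev p z + ev q z‖ ≤ ‖ev p z‖ + ‖ev q z‖ := norm_add_le _ _
      _ ≤ C₁ * max 1 ‖z‖ ^ max D₁ D₂ + C₂ * max 1 ‖z‖ ^ max D₁ D₂ := by
          gcongr
          · exact (h₁ z).trans (by nlinarith [h₁ z])
          · exact (h₂ z).trans (by nlinarith [h₂ z])
      _ = (C₁ + C₂) * max 1 ‖z‖ ^ max D₁ D₂ := by ring
  | mul_X p n hp =>
    obtain ⟨C, D, hC, h⟩ := hp
    refine ⟨C, D + 1, hC, fun z => ?_⟩
    have : ev (p * X n) z = ev p z * (![z, (starRingEnd ℂ) z] n) := by simp [ev]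
    rw [this, norm_mul]
    have hn : ‖(![z, (starRingEnd ℂ) z] n)‖ ≤ max 1 ‖z‖ := by
      fin_cases n <;> simp [le_max_right]
    calc ‖ev p z‖ * ‖(![z, (starRingEnd ℂ) z] n)‖
        ≤ (C * max 1 ‖z‖ ^ D) * max 1 ‖z‖ := by
          apply mul_le_mul (h z) hn (norm_nonneg _)
          positivity
      _ = C * max 1 ‖z‖ ^ (D + 1) := by ring

lemma pow_mul_exp_le {b : ℝ} (hb : 0 < b) (M : ℕ) {u : ℝ} (hu : 0 ≤ u) :
    u ^ M * Real.exp (-b * u) ≤ M.factorial / b ^ M := by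
  have h := Real.pow_div_factorial_le_exp (b * u) (by positivity) M
  have hbM : (0:ℝ) < b ^ M := by positivity
  have hfac : (0:ℝ) < M.factorial := by positivity
  rw [div_le_iff₀ hfac] at h
  have : u ^ M ≤ M.factorial / b ^ M * Real.exp (b * u) := by
    rw [mul_pow] at h
    rw [div_mul_eq_mul_div, le_div_iff₀ hbM]
    calc u ^ M * b ^ M = b ^ M * u ^ M := by ring
      _ ≤ Real.exp (b * u) * M.factorial := h
      _ = M.factorial * Real.exp (b * u) := by ring
  calc u ^ M * Real.exp (-b * u) ≤ (M.factorial / b ^ M * Real.exp (b * u)) * Real.exp (-b*u) := by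
        apply mul_le_mul_of_nonneg_right this (Real.exp_pos _).le
    _ = M.factorial / b ^ M * (Real.exp (b*u) * Real.exp (-b*u)) := by ring
    _ = M.factorial / b ^ M := by rw [← Real.exp_add]; norm_num

lemma max_pow_le {r : ℝ} (hr : 0 ≤ r) (M : ℕ) : max 1 r ^ M ≤ 1 + (r ^ 2) ^ M := by
  rcases le_total r 1 with h | h
  · rw [max_eq_left h]; simp; positivity
  · rw [max_eq_right h]
    have : r ^ M ≤ (r ^ 2) ^ M := by
      apply pow_le_pow_left₀ hr
      nlinarith
    linarith

lemma weight_bound {b : ℝ} (hb : 0 < b) (M : ℕ) (z : ℂ) :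
    max 1 ‖z‖ ^ M * Real.exp (-b * ‖z‖ ^ 2) ≤ 1 + M.factorial / b ^ M := by
  have hu : (0:ℝ) ≤ ‖z‖ ^ 2 := by positivity
  have h1 := max_pow_le (norm_nonneg z) M
  have h2 := pow_mul_exp_le hb M hu
  have he : Real.exp (-b * ‖z‖ ^ 2) ≤ 1 := by
    rw [Real.exp_le_one_iff]; nlinarith
  have hep := (Real.exp_pos (-b * ‖z‖ ^ 2)).le
  calc max 1 ‖z‖ ^ M * Real.exp (-b * ‖z‖ ^ 2)
      ≤ (1 + (‖z‖ ^ 2) ^ M) * Real.exp (-b * ‖z‖ ^ 2) := by gcongr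
    _ = Real.exp (-b * ‖z‖^2) + (‖z‖^2)^M * Real.exp (-b*‖z‖^2) := by ring
    _ ≤ 1 + M.factorial / b ^ M := by gcongr

lemma factorial_ratio (N D : ℕ) : ((N + D).factorial : ℝ) ≤ N.factorial * ((N:ℝ) + D) ^ D := by
  induction D with
  | zero => simp
  | succ D ih =>
    have : ((N + (D+1)).factorial : ℝ) = ((N + D : ℕ) + 1) * (N + D).factorial := by
      rw [show N + (D+1) = (N + D) + 1 by ring, Nat.factorial_succ]; push_cast; ring
    rw [this]
    have hb : ((N:ℝ) + D) ^ D ≤ ((N:ℝ) + (D+1)) ^ D := by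
      apply pow_le_pow_left₀ (by positivity)
      push_cast; linarith
    calc ((N + D : ℕ) + 1 : ℝ) * (N + D).factorial
        ≤ ((N:ℝ) + (D+1)) * (N.factorial * ((N:ℝ) + D) ^ D) := by
          apply mul_le_mul _ ih (by positivity) (by positivity)
          push_cast; linarith
      _ ≤ ((N:ℝ) + (D+1)) * (N.factorial * ((N:ℝ) + (D+1)) ^ D) := by
          gcongr
      _ = N.factorial * ((N:ℝ) + (D+1)) ^ (D+1) := by ring
      _ = N.factorial * ((N:ℝ) + ((D:ℕ)+1:ℕ)) ^ (D+1) := by push_cast; ring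


lemma gw_norm (b : ℝ) (z : ℂ) : ‖Gw b z‖ = Real.exp (-b * ‖z‖ ^ 2) := by
  rw [Gw, Complex.norm_real, Real.norm_eq_abs, abs_of_pos (Real.exp_pos _)]

lemma gw_mul (b b' : ℝ) (z : ℂ) : Gw b z * Gw b' z = Gw (b + b') z := by
  simp only [Gw, ← Complex.ofReal_mul, ← Real.exp_add]
  norm_num
  ring_nf

lemma ev_mul (p q : MvPolynomial (Fin 2) ℂ) (z : ℂ) : ev (p * q) z = ev p z * ev q z := by
  simp [ev]

lemma approx_self (c : ℝ) (p : MvPolynomial (Fin 2) ℂ) :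
    Approx c (fun z => ev p z * Gw c z) := by
  intro ε hε
  exact ⟨p, fun z => by simpa using hε⟩

lemma approx_add {c : ℝ} {g h : ℂ → ℂ} (hg : Approx c g) (hh : Approx c h) :
    Approx c (fun z => g z + h z) := by
  intro ε hε
  obtain ⟨q₁, h₁⟩ := hg (ε/2) (by linarith)
  obtain ⟨q₂, h₂⟩ := hh (ε/2) (by linarith)
  refine ⟨q₁ + q₂, fun z => ?_⟩
  have he : ev (q₁ + q₂) z = ev q₁ z + ev q₂ z := by simp [ev]
  rw [he]
  have : (ev q₁ z + ev q₂ z) * Gw c z - (g z + h z)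
      = (ev q₁ z * Gw c z - g z) + (ev q₂ z * Gw c z - h z) := by ring
  rw [this]
  calc ‖_ + _‖ ≤ ‖ev q₁ z * Gw c z - g z‖ + ‖ev q₂ z * Gw c z - h z‖ := norm_add_le _ _
    _ < ε/2 + ε/2 := by gcongr <;> [exact h₁ z; exact h₂ z]
    _ = ε := by ring

lemma approx_const_mul {c : ℝ} (a : ℂ) {g : ℂ → ℂ} (hg : Approx c g) :
    Approx c (fun z => a * g z) := by
  intro ε hε
  obtain ⟨q, hq⟩ := hg (ε / (‖a‖ + 1)) (by positivity)
  refine ⟨MvPolynomial.C a * q, fun z => ?_⟩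
  have he : ev (MvPolynomial.C a * q) z = a * ev q z := by simp [ev]
  rw [he]
  have : a * ev q z * Gw c z - a * g z = a * (ev q z * Gw c z - g z) := by ring
  rw [this, norm_mul]
  calc ‖a‖ * ‖ev q z * Gw c z - g z‖ ≤ ‖a‖ * (ε / (‖a‖ + 1)) := by
        apply mul_le_mul_of_nonneg_left (hq z).le (norm_nonneg a)
    _ < ε := by
        have h1 : (0:ℝ) < ‖a‖ + 1 := by positivity
        have : ‖a‖ * (ε / (‖a‖ + 1)) < (‖a‖ + 1) * (ε / (‖a‖ + 1)) := by
          apply mul_lt_mul_of_pos_right (by linarith) (by positivity)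
        have h2 : (‖a‖ + 1) * (ε / (‖a‖ + 1)) = ε := by field_simp
        linarith

lemma approx_conj {c : ℝ} {g : ℂ → ℂ} (hg : Approx c g) :
    Approx c (fun z => (starRingEnd ℂ) (g z)) := by
  intro ε hε
  obtain ⟨q, hq⟩ := hg ε hε
  refine ⟨rename (Equiv.swap 0 1) (MvPolynomial.map (starRingEnd ℂ) q), fun z => ?_⟩
  have hev : ev (rename (Equiv.swap 0 1) (MvPolynomial.map (starRingEnd ℂ) q)) z
      = (starRingEnd ℂ) (ev q z) := by
    rw [ev, eval_rename, ← eval₂_eq_eval_map, ev]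
    have h2 := map_eval₂Hom (RingHom.id ℂ) (![z, (starRingEnd ℂ) z]) (starRingEnd ℂ) q
    have h3 : (eval ![z, (starRingEnd ℂ) z]) q
        = eval₂Hom (RingHom.id ℂ) (![z, (starRingEnd ℂ) z]) q := rfl
    rw [h3, h2]
    have h4 : eval₂Hom ((starRingEnd ℂ).comp (RingHom.id ℂ))
        (fun i => (starRingEnd ℂ) (![z, (starRingEnd ℂ) z] i)) q
        = eval₂ (starRingEnd ℂ) (fun i => (starRingEnd ℂ) (![z, (starRingEnd ℂ) z] i)) q := by
      rw [RingHom.comp_id]; rfl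
    rw [h4]
    congr 1
    funext i
    fin_cases i <;> simp [Equiv.swap_apply_left, Equiv.swap_apply_right]
  rw [hev]
  have hGc : Gw c z = (starRingEnd ℂ) (Gw c z) := (Complex.conj_ofReal _).symm
  rw [hGc]
  have : (starRingEnd ℂ) (ev q z) * (starRingEnd ℂ) (Gw c z) - (starRingEnd ℂ) (g z)
      = (starRingEnd ℂ) (ev q z * Gw c z - g z) := by
    rw [map_sub, map_mul]
  rw [this, RCLike.norm_conj]
  exact hq z


/-- z * conj z = ‖z‖² as a complex number. -/
lemma mul_conj_eq (z : ℂ) : z * (starRingEnd ℂ) z = ((‖z‖ ^ 2 : ℝ) : ℂ) := by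
  rw [Complex.mul_conj, Complex.normSq_eq_norm_sq]

/-- The Taylor polynomial of `exp(-(a)·z z̄)` as an `MvPolynomial`, and its evaluation. -/
noncomputable def taylorPoly (a : ℝ) (N : ℕ) : MvPolynomial (Fin 2) ℂ :=
  ∑ k ∈ range N, MvPolynomial.C ((((-a) ^ k / k.factorial : ℝ)) : ℂ) * (X 0 * X 1) ^ k

lemma taylorPoly_eval (a : ℝ) (N : ℕ) (z : ℂ) :
    ev (taylorPoly a N) z
      = ((∑ k ∈ range N, (-(a * ‖z‖ ^ 2)) ^ k / k.factorial : ℝ) : ℂ) := by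
  rw [ev, taylorPoly]
  rw [map_sum]
  rw [Complex.ofReal_sum]
  apply Finset.sum_congr rfl
  intro k _
  rw [map_mul, map_pow, map_mul, eval_C, eval_X, eval_X]
  have h0 : (![z, (starRingEnd ℂ) z] 0) = z := rfl
  have h1 : (![z, (starRingEnd ℂ) z] 1) = (starRingEnd ℂ) z := rfl
  rw [h0, h1, mul_conj_eq]
  push_cast
  rw [← Complex.ofReal_pow]
  push_cast
  ring

/-- Main weighted-approximation lemma: polynomials times `Gw c` approximate polynomials
times heavier Gaussian weights `c + j·(c/2)`. -/
lemma approx_weight {c : ℝ} (hc : 0 < c) :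
    ∀ j : ℕ, ∀ p : MvPolynomial (Fin 2) ℂ,
      Approx c (fun z => ev p z * Gw (c + j * (c / 2)) z) := by
  intro j
  induction j with
  | zero =>
    intro p
    simpa using approx_self c p
  | succ j ih =>
    intro p ε hε
    set b : ℝ := c + (j : ℝ) * (c / 2) with hb
    have hbc : c ≤ b := by
      rw [hb]
      have : (0:ℝ) ≤ (j : ℝ) * (c / 2) := by positivity
      linarith
    obtain ⟨C, D, hC, hCD⟩ := ev_growth p
    -- the uniform error bound for the N-th Taylor approximation
    set β : ℕ → ℝ := fun N => C * ((1/2:ℝ)^N + (1/2:ℝ)^N * (c⁻¹)^D * (((N:ℝ) + D)^D)) with hβdef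
    have hβ0 : Tendsto β atTop (nhds 0) := by
      have t1 : Tendsto (fun N : ℕ => (1/2:ℝ)^N) atTop (nhds 0) :=
        tendsto_pow_atTop_nhds_zero_of_lt_one (by norm_num) (by norm_num)
      have t0 := tendsto_pow_const_mul_const_pow_of_lt_one D
        (show (0:ℝ) ≤ 1/2 by norm_num) (show (1/2:ℝ) < 1 by norm_num)
      have t0' := (t0.comp (tendsto_add_atTop_nat D)).mul_const ((2:ℝ)^D)
      have t2 : Tendsto (fun N : ℕ => (((N:ℝ) + D)^D) * (1/2:ℝ)^N) atTop (nhds 0) := by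
        have hfun : (fun N : ℕ => ((((N + D : ℕ):ℝ))^D * (1/2:ℝ)^(N + D)) * (2:ℝ)^D)
            = fun N : ℕ => (((N:ℝ) + D)^D) * (1/2:ℝ)^N := by
          funext n
          have h12 : (1/2:ℝ)^D * 2^D = 1 := by
            rw [← mul_pow]; norm_num
          have : ((((n + D : ℕ):ℝ))^D * (1/2:ℝ)^(n + D)) * (2:ℝ)^D
              = (((n:ℝ) + D)^D) * (1/2:ℝ)^n * ((1/2:ℝ)^D * 2^D) := by
            push_cast
            rw [pow_add]
            ring
          rw [this, h12, mul_one]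
        rw [← hfun]
        simpa using t0'
      have := (t1.const_mul C).add ((t2.const_mul (C * (c⁻¹)^D)))
      simp only [mul_zero, add_zero] at this
      have hfun2 : (fun N : ℕ => C * (1/2:ℝ)^N + C * (c⁻¹)^D * ((((N:ℝ) + D)^D) * (1/2:ℝ)^N))
          = β := by
        funext n; rw [hβdef]; ring
      rwa [hfun2] at this
    obtain ⟨N, hN⟩ := (hβ0.eventually (gt_mem_nhds (half_pos hε))).exists
    set T : MvPolynomial (Fin 2) ℂ := taylorPoly (c/2) N with hT
    -- pointwise error bound
    have key : ∀ z : ℂ, ‖ev (p * T) z * Gw b z - ev p z * Gw (b + c/2) z‖ ≤ β N := by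
      intro z
      set u : ℝ := ‖z‖^2 with hu
      have hu0 : (0:ℝ) ≤ u := by positivity
      set S : ℝ := ∑ k ∈ range N, (-(c/2 * u)) ^ k / k.factorial with hS
      have hevT : ev T z = ((S : ℝ) : ℂ) := by
        rw [hT, taylorPoly_eval]
      have hsplit : Gw (b + c/2) z = Gw b z * Gw (c/2) z := (gw_mul b (c/2) z).symm
      have heq : ev (p * T) z * Gw b z - ev p z * Gw (b + c/2) z
          = ev p z * Gw b z * (ev T z - Gw (c/2) z) := by
        rw [ev_mul, hsplit]; ring
      rw [heq, norm_mul, norm_mul]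
      have htay : ‖ev T z - Gw (c/2) z‖ ≤ (c/2 * u)^N / N.factorial := by
        rw [hevT, Gw]
        rw [← Complex.ofReal_sub, Complex.norm_real, Real.norm_eq_abs]
        have : -(c/2) * ‖z‖^2 = -(c/2 * u) := by rw [hu]; ring
        rw [this]
        rw [abs_sub_comm]
        exact exp_neg_taylor_bound N (c/2 * u) (by positivity)
      have hgb : ‖Gw b z‖ ≤ Real.exp (-c * u) := by
        rw [gw_norm, ← hu]
        apply Real.exp_le_exp.mpr
        nlinarith
      have hp : ‖ev p z‖ ≤ C * (1 + u^D) := by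
        refine (hCD z).trans ?_
        have := max_pow_le (norm_nonneg z) D
        rw [← hu] at this
        nlinarith [this]
      calc ‖ev p z‖ * ‖Gw b z‖ * ‖ev T z - Gw (c/2) z‖
          ≤ (C * (1 + u^D)) * Real.exp (-c * u) * ((c/2 * u)^N / N.factorial) := by
            have hn1 : (0:ℝ) ≤ C * (1 + u^D) := by
              apply mul_nonneg hC; positivity
            apply mul_le_mul _ htay (norm_nonneg _)
            · apply mul_nonneg hn1 (Real.exp_pos _).le
            · exact mul_le_mul hp hgb (norm_nonneg _) hn1
          _ ≤ β N := by
            have e1 : u^N * Real.exp (-c*u) ≤ N.factorial / c^N := pow_mul_exp_le hc N hu0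
            have e2 : u^(N+D) * Real.exp (-c*u) ≤ (N+D).factorial / c^(N+D) :=
              pow_mul_exp_le hc (N+D) hu0
            have e3 := factorial_ratio N D
            have hcN : (0:ℝ) < c^N := by positivity
            have hcND : (0:ℝ) < c^(N+D) := by positivity
            have hfN : (0:ℝ) < (N.factorial:ℝ) := by positivity
            have hexp : (0:ℝ) < Real.exp (-c*u) := Real.exp_pos _
            -- expand and compare the two resulting terms
            have expand : (C * (1 + u^D)) * Real.exp (-c * u) * ((c/2 * u)^N / N.factorial)
                = C * ((c/2)^N / N.factorial * (u^N * Real.exp (-c*u)))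
                  + C * ((c/2)^N / N.factorial * (u^(N+D) * Real.exp (-c*u))) := by
              rw [mul_pow, pow_add]
              field_simp
            rw [expand, hβdef]
            have t1 : C * ((c/2)^N / N.factorial * (u^N * Real.exp (-c*u)))
                ≤ C * (1/2:ℝ)^N := by
              apply mul_le_mul_of_nonneg_left _ hC
              calc (c/2)^N / N.factorial * (u^N * Real.exp (-c*u))
                  ≤ (c/2)^N / N.factorial * (N.factorial / c^N) := by
                    gcongr
                  _ = (1/2:ℝ)^N := by
                    rw [div_pow]
                    field_simp
                    rw [← mul_pow]; norm_num
            have t2 : C * ((c/2)^N / N.factorial * (u^(N+D) * Real.exp (-c*u)))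
                ≤ C * ((1/2:ℝ)^N * (c⁻¹)^D * (((N:ℝ) + D)^D)) := by
              apply mul_le_mul_of_nonneg_left _ hC
              calc (c/2)^N / N.factorial * (u^(N+D) * Real.exp (-c*u))
                  ≤ (c/2)^N / N.factorial * ((N+D).factorial / c^(N+D)) := by
                    gcongr
                  _ ≤ (c/2)^N / N.factorial * ((N.factorial * ((N:ℝ) + D)^D) / c^(N+D)) := by
                    gcongr
                  _ = (1/2:ℝ)^N * (c⁻¹)^D * (((N:ℝ) + D)^D) := by
                    rw [div_pow, pow_add]
                    field_simp
                    have h2 : (1/2:ℝ)^N * 2^N = 1 := by rw [← mul_pow]; norm_num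
                    have hc' : c^D * (1/c)^D = 1 := by rw [← mul_pow, mul_one_div_cancel hc.ne', one_pow]
                    linear_combination (-(((N:ℝ)+D)^D)) * h2 + (-(((N:ℝ)+D)^D) * ((1/2:ℝ)^N * 2^N)) * hc'
            linarith
    -- combine with the inductive hypothesis
    obtain ⟨q, hq⟩ := ih (p * T) (ε/2) (half_pos hε)
    refine ⟨q, fun z => ?_⟩
    have harith : c + ((j:ℕ)+1:ℕ) * (c/2) = b + c/2 := by
      rw [hb]; push_cast; ring
    calc ‖ev q z * Gw c z - ev p z * Gw (c + ((j+1:ℕ):ℝ) * (c/2)) z‖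
        = ‖(ev q z * Gw c z - ev (p * T) z * Gw b z)
            + (ev (p * T) z * Gw b z - ev p z * Gw (b + c/2) z)‖ := by
          rw [show c + ((j+1:ℕ):ℝ) * (c/2) = b + c/2 by push_cast [hb]; ring]
          congr 1
          ring
      _ ≤ ‖ev q z * Gw c z - ev (p * T) z * Gw b z‖
            + ‖ev (p * T) z * Gw b z - ev p z * Gw (b + c/2) z‖ := norm_add_le _ _
      _ < ε/2 + ε/2 :=
          add_lt_add (by simpa using hq z) (lt_of_le_of_lt (key z) hN)
      _ = ε := by ring


/-- A polynomial multiplied by a Gaussian weight is a bounded function. -/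
lemma ev_gw_bound {c : ℝ} (hc : 0 < c) (q : MvPolynomial (Fin 2) ℂ) :
    ∃ M : ℝ, 0 ≤ M ∧ ∀ z : ℂ, ‖ev q z * Gw c z‖ ≤ M := by
  obtain ⟨C, D, hC, hCD⟩ := ev_growth q
  refine ⟨C * (1 + D.factorial / c ^ D), by positivity, fun z => ?_⟩
  rw [norm_mul, gw_norm]
  calc ‖ev q z‖ * Real.exp (-c * ‖z‖ ^ 2)
      ≤ (C * max 1 ‖z‖ ^ D) * Real.exp (-c * ‖z‖ ^ 2) := by
        apply mul_le_mul_of_nonneg_right (hCD z) (Real.exp_pos _).le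
    _ = C * (max 1 ‖z‖ ^ D * Real.exp (-c * ‖z‖ ^ 2)) := by ring
    _ ≤ C * (1 + D.factorial / c ^ D) :=
        mul_le_mul_of_nonneg_left (weight_bound hc D z) hC

/-- A function approximable in the weighted sense is bounded. -/
lemma approx_bound {c : ℝ} (hc : 0 < c) {g : ℂ → ℂ} (hg : Approx c g) :
    ∃ M : ℝ, 0 ≤ M ∧ ∀ z : ℂ, ‖g z‖ ≤ M := by
  obtain ⟨q, hq⟩ := hg 1 one_pos
  obtain ⟨M, hM0, hM⟩ := ev_gw_bound hc q
  refine ⟨M + 1, by linarith, fun z => ?_⟩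
  have h1 := hq z
  have h2 := hM z
  calc ‖g z‖ = ‖ev q z * Gw c z - (ev q z * Gw c z - g z)‖ := by congr 1; ring
    _ ≤ ‖ev q z * Gw c z‖ + ‖ev q z * Gw c z - g z‖ := norm_sub_le _ _
    _ ≤ M + 1 := by linarith

lemma approx_mul {c : ℝ} (hc : 0 < c) {g h : ℂ → ℂ} (hg : Approx c g) (hh : Approx c h) :
    Approx c (fun z => g z * h z) := by
  intro ε hε
  obtain ⟨Mg, hMg0, hMg⟩ := approx_bound hc hg
  obtain ⟨Mh, hMh0, hMh⟩ := approx_bound hc hh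
  set δ : ℝ := min 1 (ε / 2 / (Mg + Mh + 2)) with hδdef
  have hδpos : 0 < δ := by
    apply lt_min one_pos
    positivity
  have hδ1 : δ ≤ 1 := min_le_left _ _
  have hδ2 : δ ≤ ε / 2 / (Mg + Mh + 2) := min_le_right _ _
  obtain ⟨q₁, hq₁⟩ := hg δ hδpos
  obtain ⟨q₂, hq₂⟩ := hh δ hδpos
  -- the product of the two approximants, with weight 2c
  have h2c : Approx c (fun z => ev (q₁ * q₂) z * Gw (2 * c) z) := by
    have := approx_weight hc 2 (q₁ * q₂)
    have harith : c + ((2:ℕ):ℝ) * (c / 2) = 2 * c := by push_cast; ring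
    rwa [harith] at this
  obtain ⟨q, hq⟩ := h2c (ε / 2) (half_pos hε)
  refine ⟨q, fun z => ?_⟩
  have hprod : ev (q₁ * q₂) z * Gw (2 * c) z
      = (ev q₁ z * Gw c z) * (ev q₂ z * Gw c z) := by
    rw [ev_mul, show (2:ℝ) * c = c + c by ring, ← gw_mul]
    ring
  -- error between approximant product and g·h
  have herr : ‖ev (q₁ * q₂) z * Gw (2 * c) z - g z * h z‖ ≤ ε / 2 := by
    rw [hprod]
    have e1 : (ev q₁ z * Gw c z) * (ev q₂ z * Gw c z) - g z * h z
        = (ev q₁ z * Gw c z - g z) * (ev q₂ z * Gw c z) + g z * (ev q₂ z * Gw c z - h z) := by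
      ring
    rw [e1]
    have b2 : ‖ev q₂ z * Gw c z‖ ≤ Mh + 1 := by
      calc ‖ev q₂ z * Gw c z‖ = ‖(ev q₂ z * Gw c z - h z) + h z‖ := by congr 1; ring
        _ ≤ ‖ev q₂ z * Gw c z - h z‖ + ‖h z‖ := norm_add_le _ _
        _ ≤ Mh + 1 := by
            have := (hq₂ z).le
            have := hMh z
            linarith
    calc ‖_ + _‖ ≤ ‖(ev q₁ z * Gw c z - g z) * (ev q₂ z * Gw c z)‖
          + ‖g z * (ev q₂ z * Gw c z - h z)‖ := norm_add_le _ _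
      _ ≤ δ * (Mh + 1) + Mg * δ := by
          apply add_le_add
          · rw [norm_mul]
            exact mul_le_mul (hq₁ z).le b2 (norm_nonneg _) hδpos.le
          · rw [norm_mul]
            exact mul_le_mul (hMg z) (hq₂ z).le (norm_nonneg _) hMg0
      _ = (Mg + Mh + 1) * δ := by ring
      _ ≤ ε / 2 := by
          have hpos : (0:ℝ) < Mg + Mh + 2 := by positivity
          calc (Mg + Mh + 1) * δ ≤ (Mg + Mh + 2) * (ε / 2 / (Mg + Mh + 2)) := by
                apply mul_le_mul (by linarith) hδ2 hδpos.le (by positivity)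
            _ = ε / 2 := by field_simp
  calc ‖ev q z * Gw c z - g z * h z‖
      = ‖(ev q z * Gw c z - ev (q₁ * q₂) z * Gw (2 * c) z)
          + (ev (q₁ * q₂) z * Gw (2 * c) z - g z * h z)‖ := by congr 1; ring
    _ ≤ ‖ev q z * Gw c z - ev (q₁ * q₂) z * Gw (2 * c) z‖
          + ‖ev (q₁ * q₂) z * Gw (2 * c) z - g z * h z‖ := norm_add_le _ _
    _ < ε / 2 + ε / 2 := add_lt_add_of_lt_of_le (by simpa using hq z) herr
    _ = ε := by ring


lemma gw_continuous (b : ℝ) : Continuous (fun z : ℂ => Gw b z) := by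
  unfold Gw
  fun_prop

lemma gw_tendsto {b : ℝ} (hb : 0 < b) :
    Tendsto (fun z : ℂ => Gw b z) (cocompact ℂ) (nhds 0) := by
  rw [tendsto_zero_iff_norm_tendsto_zero]
  simp only [gw_norm]
  have h1 : Tendsto (fun z : ℂ => ‖z‖) (cocompact ℂ) atTop := tendsto_norm_cocompact_atTop
  have h2 : Tendsto (fun r : ℝ => Real.exp (-b * r ^ 2)) atTop (nhds 0) := by
    apply Real.tendsto_exp_atBot.comp
    have h3 : Tendsto (fun r : ℝ => r ^ 2) atTop atTop := tendsto_pow_atTop (by norm_num)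
    have h4 : Tendsto (fun x : ℝ => -b * x) atTop atBot :=
      Tendsto.const_mul_atTop_of_neg (by linarith) tendsto_id
    exact h4.comp h3
  exact h2.comp h1

lemma zgw_tendsto {b : ℝ} (hb : 0 < b) :
    Tendsto (fun z : ℂ => z * Gw b z) (cocompact ℂ) (nhds 0) := by
  have hb2 : 0 < b / 2 := by linarith
  apply squeeze_zero_norm (a := fun z : ℂ =>
      (1 + (Nat.factorial 1 : ℝ) / (b/2) ^ 1) * Real.exp (-(b/2) * ‖z‖ ^ 2))
  · intro z
    rw [norm_mul, gw_norm]
    have key : ‖z‖ * Real.exp (-b * ‖z‖ ^ 2)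
        ≤ (1 + (Nat.factorial 1 : ℝ) / (b/2) ^ 1) * Real.exp (-(b/2) * ‖z‖ ^ 2) := by
      have hsplit : Real.exp (-b * ‖z‖ ^ 2)
          = Real.exp (-(b/2) * ‖z‖ ^ 2) * Real.exp (-(b/2) * ‖z‖ ^ 2) := by
        rw [← Real.exp_add]; ring_nf
      rw [hsplit]
      have h1 : ‖z‖ ≤ max 1 ‖z‖ := le_max_right _ _
      have h2 := weight_bound hb2 1 z
      rw [pow_one] at h2
      rw [show ((Nat.factorial 1 : ℝ) / (b/2) ^ 1) = (Nat.factorial 1 : ℝ) / (b/2) by rw [pow_one]]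
      calc ‖z‖ * (Real.exp (-(b/2) * ‖z‖ ^ 2) * Real.exp (-(b/2) * ‖z‖ ^ 2))
          = (‖z‖ * Real.exp (-(b/2) * ‖z‖ ^ 2)) * Real.exp (-(b/2) * ‖z‖ ^ 2) := by ring
        _ ≤ ((max 1 ‖z‖) * Real.exp (-(b/2) * ‖z‖ ^ 2)) * Real.exp (-(b/2) * ‖z‖ ^ 2) := by
            apply mul_le_mul_of_nonneg_right _ (Real.exp_pos _).le
            apply mul_le_mul_of_nonneg_right h1 (Real.exp_pos _).le
        _ ≤ (1 + (Nat.factorial 1 : ℝ) / (b/2)) * Real.exp (-(b/2) * ‖z‖ ^ 2) := by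
            rw [pow_one] at h2
            apply mul_le_mul_of_nonneg_right h2 (Real.exp_pos _).le
    exact key
  · have := gw_tendsto hb2
    rw [tendsto_zero_iff_norm_tendsto_zero] at this
    have h5 := this.const_mul (1 + (Nat.factorial 1 : ℝ) / (b/2) ^ 1)
    rw [mul_zero] at h5
    refine h5.congr (fun z => ?_)
    rw [gw_norm]


theorem stmt_1 (c : ℝ) (hc : 0 < c)
    (f : ℂ → ℂ) (hf : Continuous f) (hf0 : Tendsto f (cocompact ℂ) (nhds 0))
    (ε : ℝ) (hε : 0 < ε) :
    ∃ q : MvPolynomial (Fin 2) ℂ, ∀ z : ℂ,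
      ‖MvPolynomial.eval ![z, (starRingEnd ℂ) z] q * (Real.exp (-c * ‖z‖ ^ 2) : ℂ) - f z‖ < ε := by
  -- continuous extensions to the one-point compactification
  let F : C(OnePoint ℂ, ℂ) := OnePoint.continuousMapMk ⟨f, hf⟩ 0
    (by rw [coclosedCompact_eq_cocompact]; exact hf0)
  let E : C(OnePoint ℂ, ℂ) := OnePoint.continuousMapMk ⟨fun z => Gw c z, gw_continuous c⟩ 0
    (by rw [coclosedCompact_eq_cocompact]; exact gw_tendsto hc)
  let Z : C(OnePoint ℂ, ℂ) := OnePoint.continuousMapMk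
    ⟨fun z => z * Gw c z, continuous_id.mul (gw_continuous c)⟩ 0
    (by rw [coclosedCompact_eq_cocompact]; exact zgw_tendsto hc)
  have hE_coe : ∀ z : ℂ, E (z : OnePoint ℂ) = Gw c z := fun z => rfl
  have hE_inf : E ∞ = 0 := rfl
  have hZ_coe : ∀ z : ℂ, Z (z : OnePoint ℂ) = z * Gw c z := fun z => rfl
  have hZ_inf : Z ∞ = 0 := rfl
  have hF_coe : ∀ z : ℂ, F (z : OnePoint ℂ) = f z := fun z => rfl
  have hF_inf : F ∞ = 0 := rfl
  set A : StarSubalgebra ℂ C(OnePoint ℂ, ℂ) := StarAlgebra.adjoin ℂ {E, Z} with hA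
  -- A separates points
  have hsep : A.SeparatesPoints := by
    intro x y hxy
    have hEA : E ∈ A := StarAlgebra.subset_adjoin ℂ _ (Set.mem_insert _ _)
    have hZA : Z ∈ A := StarAlgebra.subset_adjoin ℂ _ (Set.mem_insert_of_mem _ rfl)
    induction x using OnePoint.rec with
    | infty =>
      induction y using OnePoint.rec with
      | infty => exact absurd rfl hxy
      | coe w =>
        refine ⟨E, ⟨E, hEA, rfl⟩, ?_⟩
        intro h
        rw [hE_inf, hE_coe] at h
        exact (Complex.ofReal_ne_zero.mpr (Real.exp_ne_zero _) : Gw c w ≠ 0) h.symm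
    | coe v =>
      induction y using OnePoint.rec with
      | infty =>
        refine ⟨E, ⟨E, hEA, rfl⟩, ?_⟩
        intro h
        rw [hE_inf, hE_coe] at h
        exact (Complex.ofReal_ne_zero.mpr (Real.exp_ne_zero _) : Gw c v ≠ 0) h
      | coe w =>
        have hvw : v ≠ w := fun h => hxy (by rw [h])
        by_cases hG : Gw c v = Gw c w
        · refine ⟨Z, ⟨Z, hZA, rfl⟩, ?_⟩
          intro h
          rw [hZ_coe, hZ_coe, hG] at h
          have hGn : Gw c w ≠ 0 := Complex.ofReal_ne_zero.mpr (Real.exp_ne_zero _)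
          exact hvw (mul_right_cancel₀ hGn h)
        · refine ⟨E, ⟨E, hEA, rfl⟩, ?_⟩
          intro h
          rw [hE_coe, hE_coe] at h
          exact hG h
  -- every element of A is weighted-approximable
  have hstruct : ∀ g : C(OnePoint ℂ, ℂ), g ∈ A →
      Approx c (fun z => g (z : OnePoint ℂ) - g ∞) := by
    intro g hg
    induction hg using StarAlgebra.adjoin_induction with
    | mem x hx =>
      rcases hx with hx | hx
      · subst hx
        intro ε' hε'
        refine ⟨1, fun z => ?_⟩
        show ‖ev 1 z * Gw c z - (E (z : OnePoint ℂ) - E ∞)‖ < ε'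
        rw [hE_coe, hE_inf]
        simpa [ev] using hε'
      · rw [Set.mem_singleton_iff] at hx
        subst hx
        intro ε' hε'
        refine ⟨X 0, fun z => ?_⟩
        show ‖ev (X 0) z * Gw c z - (Z (z : OnePoint ℂ) - Z ∞)‖ < ε'
        rw [hZ_coe, hZ_inf]
        have : ev (X 0) z = z := by simp [ev]
        rw [this]
        simpa using hε'
    | algebraMap r =>
      intro ε' hε'
      refine ⟨0, fun z => ?_⟩
      show ‖ev 0 z * Gw c z - ((algebraMap ℂ C(OnePoint ℂ, ℂ) r) (z : OnePoint ℂ)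
          - (algebraMap ℂ C(OnePoint ℂ, ℂ) r) ∞)‖ < ε'
      have hr : ∀ x : OnePoint ℂ, (algebraMap ℂ C(OnePoint ℂ, ℂ) r) x = r := by
        intro x
        simp [Algebra.algebraMap_eq_smul_one]
      rw [hr, hr]
      simpa [ev] using hε'
    | add x y hx hy ihx ihy =>
      have hfeq : (fun z : ℂ => (x + y) (z : OnePoint ℂ) - (x + y) ∞)
          = fun z : ℂ => (x (z:OnePoint ℂ) - x ∞) + (y (z:OnePoint ℂ) - y ∞) := by
        funext z
        simp only [ContinuousMap.add_apply]
        ring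
      rw [hfeq]
      exact approx_add ihx ihy
    | mul x y hx hy ihx ihy =>
      have hfeq : (fun z : ℂ => (x * y) (z : OnePoint ℂ) - (x * y) ∞)
          = fun z : ℂ => (x (z:OnePoint ℂ) - x ∞) * (y (z:OnePoint ℂ) - y ∞)
            + (x ∞ * (y (z:OnePoint ℂ) - y ∞) + y ∞ * (x (z:OnePoint ℂ) - x ∞)) := by
        funext z
        simp only [ContinuousMap.mul_apply]
        ring
      rw [hfeq]
      exact approx_add (approx_mul hc ihx ihy)
        (approx_add (approx_const_mul (x ∞) ihy) (approx_const_mul (y ∞) ihx))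
    | star x hx ihx =>
      have hfeq : (fun z : ℂ => (star x) (z : OnePoint ℂ) - (star x) ∞)
          = fun z : ℂ => (starRingEnd ℂ) (x (z:OnePoint ℂ) - x ∞) := by
        funext z
        simp only [ContinuousMap.star_apply, map_sub, starRingEnd_apply]
      rw [hfeq]
      exact approx_conj ihx
  -- Stone–Weierstrass
  have htop := ContinuousMap.starSubalgebra_topologicalClosure_eq_top_of_separatesPoints A hsep
  have hFcl : F ∈ closure (A : Set C(OnePoint ℂ, ℂ)) := by
    rw [← StarSubalgebra.topologicalClosure_coe, htop]
    trivial
  rw [Metric.mem_closure_iff] at hFcl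
  obtain ⟨g, hgA, hgdist⟩ := hFcl (ε/3) (by linarith)
  obtain ⟨q, hq⟩ := hstruct g hgA (ε/3) (by linarith)
  refine ⟨q, fun z => ?_⟩
  have hGeq : (Real.exp (-c * ‖z‖ ^ 2) : ℂ) = Gw c z := by rw [Gw]
  rw [hGeq]
  have e1 : MvPolynomial.eval ![z, (starRingEnd ℂ) z] q * Gw c z - f z
      = (ev q z * Gw c z - (g (z : OnePoint ℂ) - g ∞))
        + (g (z : OnePoint ℂ) - F (z : OnePoint ℂ)) + (-(g ∞ - F ∞)) := by
    rw [ev, hF_coe, hF_inf]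
    ring
  rw [e1]
  have d1 : ‖ev q z * Gw c z - (g (z : OnePoint ℂ) - g ∞)‖ < ε/3 := hq z
  have d2 : ‖g (z : OnePoint ℂ) - F (z : OnePoint ℂ)‖ < ε/3 := by
    have := ContinuousMap.dist_apply_le_dist (f := g) (g := F) (z : OnePoint ℂ)
    rw [dist_eq_norm] at this
    calc ‖g (z : OnePoint ℂ) - F (z : OnePoint ℂ)‖ ≤ dist g F := this
      _ = dist F g := dist_comm _ _
      _ < ε/3 := hgdist
  have d3 : ‖-(g ∞ - F ∞)‖ < ε/3 := by
    rw [norm_neg]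
    have := ContinuousMap.dist_apply_le_dist (f := g) (g := F) (∞ : OnePoint ℂ)
    rw [dist_eq_norm] at this
    calc ‖g ∞ - F ∞‖ ≤ dist g F := this
      _ = dist F g := dist_comm _ _
      _ < ε/3 := hgdist
  calc ‖_ + _ + _‖ ≤ ‖_ + _‖ + ‖-(g ∞ - F ∞)‖ := norm_add_le _ _
    _ ≤ ‖ev q z * Gw c z - (g (z : OnePoint ℂ) - g ∞)‖
        + ‖g (z : OnePoint ℂ) - F (z : OnePoint ℂ)‖ + ‖-(g ∞ - F ∞)‖ := by
        have := norm_add_le (ev q z * Gw c z - (g (z : OnePoint ℂ) - g ∞))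
          (g (z : OnePoint ℂ) - F (z : OnePoint ℂ))
        linarith
    _ < ε/3 + ε/3 + ε/3 := by linarith
    _ = ε := by ring
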